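/- The quotient ring ℂ[x,y,z]/I, where I = ((x²) + (y,z)²)² + (y³ − x³z), is a 24-dimensional ℂ-vector space. -/

import Mathlib

open MvPolynomial
noncomputable section QI24
abbrev Rp : Type := MvPolynomial (Fin 3) ℂ


def Ee (a b c : ℕ) : Fin 3 →₀ ℕ :=
  Finsupp.single 0 a + Finsupp.single 1 b + Finsupp.single 2 c

@[simp] lemma Ee_apply0 (a b c : ℕ) : Ee a b c 0 = a := by
  simp [Ee, Finsupp.single_apply]
@[simp] lemma Ee_apply1 (a b c : ℕ) : Ee a b c 1 = b := by
  simp [Ee, Finsupp.single_apply]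
@[simp] lemma Ee_apply2 (a b c : ℕ) : Ee a b c 2 = c := by
  simp [Ee, Finsupp.single_apply]

lemma ME (a b c : ℕ) :
    (monomial (Ee a b c) (1 : ℂ) : Rp) = X 0 ^ a * X 1 ^ b * X 2 ^ c := by
  simp [Ee, X_pow_eq_monomial, monomial_mul]

lemma Ee_eq_iff (a b c : ℕ) (d : Fin 3 →₀ ℕ) :
    Ee a b c = d ↔ d 0 = a ∧ d 1 = b ∧ d 2 = c := by
  constructor
  · rintro rfl; simp
  · rintro ⟨h1, h2, h3⟩
    ext j
    fin_cases j <;> simp [h1, h2, h3]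

lemma coeff_XXX (d : Fin 3 →₀ ℕ) (a b c : ℕ) :
    coeff d ((X 0) ^ a * (X 1) ^ b * (X 2) ^ c : Rp)
      = if d 0 = a ∧ d 1 = b ∧ d 2 = c then 1 else 0 := by
  rw [← ME, coeff_monomial]
  by_cases h : d 0 = a ∧ d 1 = b ∧ d 2 = c
  · rw [if_pos h, if_pos ((Ee_eq_iff a b c d).mpr h)]
  · rw [if_neg h, if_neg (fun hh => h ((Ee_eq_iff a b c d).mp hh))]


def tt : Fin 24 → ℕ × ℕ × ℕ :=
  ![(0,0,0), (1,0,0), (0,1,0), (0,0,1),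
    (2,0,0), (1,1,0), (1,0,1), (0,2,0), (0,1,1), (0,0,2),
    (3,0,0), (2,1,0), (2,0,1), (1,2,0), (1,1,1), (1,0,2), (0,2,1), (0,1,2), (0,0,3),
    (3,1,0), (3,0,1), (1,2,1), (1,1,2), (1,0,3)]

def vv (i : Fin 24) : Rp := X 0 ^ (tt i).1 * X 1 ^ (tt i).2.1 * X 2 ^ (tt i).2.2

def V24 : Submodule ℂ Rp := Submodule.span ℂ (Set.range vv)

def Wgens : Set Rp :=
  { p | ∃ a b c : ℕ, 5 ≤ a + b + c ∧ p = X 0 ^ a * X 1 ^ b * X 2 ^ c }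

def Ugens : Set Rp :=
  {X 0 ^ 4, X 0 ^ 2 * X 1 ^ 2, X 0 ^ 2 * X 1 * X 2, X 0 ^ 2 * X 2 ^ 2,
   X 1 ^ 4, X 1 ^ 3 * X 2, X 1 ^ 2 * X 2 ^ 2, X 1 * X 2 ^ 3, X 2 ^ 4,
   X 1 ^ 3 - X 0 ^ 3 * X 2, X 0 * X 1 ^ 3 - X 0 ^ 4 * X 2}

def TT : Submodule ℂ Rp := Submodule.span ℂ (Ugens ∪ Wgens)

def JJ : Ideal Rp :=
  (Ideal.span {(X 0 : Rp) ^ 2} + (Ideal.span {(X 1 : Rp), X 2}) ^ 2) ^ 2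
    + Ideal.span {(X 1 : Rp) ^ 3 - (X 0) ^ 3 * X 2}

-- abbreviations
def AB : Ideal Rp := Ideal.span {(X 0 : Rp) ^ 2} + (Ideal.span {(X 1 : Rp), X 2}) ^ 2

lemma hx2 : (X 0 : Rp) ^ 2 ∈ AB :=
  Submodule.mem_sup_left (Ideal.subset_span rfl)

lemma hy2 : (X 1 : Rp) ^ 2 ∈ AB := by
  refine Submodule.mem_sup_right ?_
  rw [pow_two, pow_two]
  exact Ideal.mul_mem_mul (Ideal.subset_span (by simp)) (Ideal.subset_span (by simp))

lemma hyz : (X 1 : Rp) * X 2 ∈ AB := by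
  refine Submodule.mem_sup_right ?_
  rw [pow_two]
  exact Ideal.mul_mem_mul (Ideal.subset_span (by simp)) (Ideal.subset_span (by simp))

lemma hz2 : (X 2 : Rp) ^ 2 ∈ AB := by
  refine Submodule.mem_sup_right ?_
  rw [pow_two, pow_two]
  exact Ideal.mul_mem_mul (Ideal.subset_span (by simp)) (Ideal.subset_span (by simp))

lemma memQ {p q : Rp} (hp : p ∈ AB) (hq : q ∈ AB) : p * q ∈ JJ := by
  refine Submodule.mem_sup_left ?_
  rw [pow_two]
  exact Ideal.mul_mem_mul hp hq

lemma hb_mem : ((X 1 : Rp) ^ 3 - X 0 ^ 3 * X 2) ∈ JJ :=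
  Submodule.mem_sup_right (Ideal.subset_span rfl)

lemma hg1 : (X 0 : Rp) ^ 4 ∈ JJ := by
  rw [show ((X 0 : Rp) ^ 4) = X 0 ^ 2 * X 0 ^ 2 by ring]; exact memQ hx2 hx2
lemma hg2 : (X 0 : Rp) ^ 2 * X 1 ^ 2 ∈ JJ := memQ hx2 hy2
lemma hg3 : (X 0 : Rp) ^ 2 * X 1 * X 2 ∈ JJ := by
  rw [show ((X 0 : Rp) ^ 2 * X 1 * X 2) = X 0 ^ 2 * (X 1 * X 2) by ring]
  exact memQ hx2 hyz
lemma hg4 : (X 0 : Rp) ^ 2 * X 2 ^ 2 ∈ JJ := memQ hx2 hz2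
lemma hg5 : (X 1 : Rp) ^ 4 ∈ JJ := by
  rw [show ((X 1 : Rp) ^ 4) = X 1 ^ 2 * X 1 ^ 2 by ring]; exact memQ hy2 hy2
lemma hg6 : (X 1 : Rp) ^ 3 * X 2 ∈ JJ := by
  rw [show ((X 1 : Rp) ^ 3 * X 2) = X 1 ^ 2 * (X 1 * X 2) by ring]; exact memQ hy2 hyz
lemma hg7 : (X 1 : Rp) ^ 2 * X 2 ^ 2 ∈ JJ := memQ hy2 hz2
lemma hg8 : (X 1 : Rp) * X 2 ^ 3 ∈ JJ := by
  rw [show ((X 1 : Rp) * X 2 ^ 3) = X 1 * X 2 * X 2 ^ 2 by ring]; exact memQ hyz hz2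
lemma hg9 : (X 2 : Rp) ^ 4 ∈ JJ := by
  rw [show ((X 2 : Rp) ^ 4) = X 2 ^ 2 * X 2 ^ 2 by ring]; exact memQ hz2 hz2
lemma hg11 : (X 0 : Rp) * X 1 ^ 3 - X 0 ^ 4 * X 2 ∈ JJ := by
  rw [show ((X 0 : Rp) * X 1 ^ 3 - X 0 ^ 4 * X 2) = X 0 * (X 1 ^ 3 - X 0 ^ 3 * X 2) by ring]
  exact Ideal.mul_mem_left _ _ hb_mem

lemma mono_step {a b c a' b' c' : ℕ} (ha : a' ≤ a) (hb : b' ≤ b) (hc : c' ≤ c)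
    (h : (X 0 ^ a' * X 1 ^ b' * X 2 ^ c' : Rp) ∈ JJ) :
    (X 0 ^ a * X 1 ^ b * X 2 ^ c : Rp) ∈ JJ := by
  obtain ⟨a2, rfl⟩ : ∃ k, a = a' + k := ⟨a - a', by omega⟩
  obtain ⟨b2, rfl⟩ : ∃ k, b = b' + k := ⟨b - b', by omega⟩
  obtain ⟨c2, rfl⟩ : ∃ k, c = c' + k := ⟨c - c', by omega⟩
  rw [show (X 0 ^ (a' + a2) * X 1 ^ (b' + b2) * X 2 ^ (c' + c2) : Rp)
      = (X 0 ^ a2 * X 1 ^ b2 * X 2 ^ c2) * (X 0 ^ a' * X 1 ^ b' * X 2 ^ c') by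
    rw [pow_add, pow_add, pow_add]; ring]
  exact Ideal.mul_mem_left _ _ h

lemma mem_JJ_of_deg5 {a b c : ℕ} (h : 5 ≤ a + b + c) :
    (X 0 ^ a * X 1 ^ b * X 2 ^ c : Rp) ∈ JJ := by
  rcases Nat.lt_or_ge a 4 with ha | ha
  · rcases Nat.lt_or_ge (b + c) 4 with hbc | hbc
    · -- a ≥ 2, b + c ≥ 2
      rcases Nat.lt_or_ge b 2 with hb | hb
      · interval_cases b
        · exact mono_step (a' := 2) (b' := 0) (c' := 2) (by omega) (by omega) (by omega)
            (by simpa using hg4)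
        · exact mono_step (a' := 2) (b' := 1) (c' := 1) (by omega) (by omega) (by omega)
            (by simpa using hg3)
      · exact mono_step (a' := 2) (b' := 2) (c' := 0) (by omega) (by omega) (by omega)
          (by simpa using hg2)
    · rcases Nat.lt_or_ge b 4 with hb | hb
      · interval_cases b
        · exact mono_step (a' := 0) (b' := 0) (c' := 4) (by omega) (by omega) (by omega)
            (by simpa using hg9)
        · exact mono_step (a' := 0) (b' := 1) (c' := 3) (by omega) (by omega) (by omega)
            (by simpa using hg8)
        · exact mono_step (a' := 0) (b' := 2) (c' := 2) (by omega) (by omega) (by omega)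
            (by simpa using hg7)
        · exact mono_step (a' := 0) (b' := 3) (c' := 1) (by omega) (by omega) (by omega)
            (by simpa using hg6)
      · exact mono_step (a' := 0) (b' := 4) (c' := 0) (by omega) (by omega) (by omega)
          (by simpa using hg5)
  · exact mono_step (a' := 4) (b' := 0) (c' := 0) ha (Nat.zero_le _) (Nat.zero_le _)
      (by simpa using hg1)

lemma Wgens_subset_JJ : Wgens ⊆ (JJ.restrictScalars ℂ : Set Rp) := by
  rintro p ⟨a, b, c, h5, rfl⟩
  exact mem_JJ_of_deg5 h5

lemma TT_le_JJ : TT ≤ JJ.restrictScalars ℂ := by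
  rw [TT, Submodule.span_le]
  rintro p (hp | hp)
  · simp only [Ugens, Set.mem_insert_iff, Set.mem_singleton_iff] at hp
    rcases hp with rfl|rfl|rfl|rfl|rfl|rfl|rfl|rfl|rfl|rfl|rfl
    exacts [hg1, hg2, hg3, hg4, hg5, hg6, hg7, hg8, hg9, hb_mem, hg11]
  · exact Wgens_subset_JJ hp

def Gset : Set Rp :=
  {X 0 ^ 4, X 0 ^ 2 * X 1 ^ 2, X 0 ^ 2 * X 1 * X 2, X 0 ^ 2 * X 2 ^ 2,
   X 1 ^ 4, X 1 ^ 3 * X 2, X 1 ^ 2 * X 2 ^ 2, X 1 * X 2 ^ 3, X 2 ^ 4,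
   X 1 ^ 3 - X 0 ^ 3 * X 2}

lemma gm0 : (X 0 ^ 4 : Rp) ∈ Ideal.span Gset :=
  Ideal.subset_span (by rw [Gset]; exact Set.mem_insert _ _)
lemma gm1 : (X 0 ^ 2 * X 1 ^ 2 : Rp) ∈ Ideal.span Gset :=
  Ideal.subset_span (by rw [Gset]; exact Set.mem_insert_of_mem _ (Set.mem_insert _ _))
lemma gm2 : (X 0 ^ 2 * X 1 * X 2 : Rp) ∈ Ideal.span Gset :=
  Ideal.subset_span (by rw [Gset]; exact Set.mem_insert_of_mem _ (Set.mem_insert_of_mem _ (Set.mem_insert _ _)))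
lemma gm3 : (X 0 ^ 2 * X 2 ^ 2 : Rp) ∈ Ideal.span Gset :=
  Ideal.subset_span (by rw [Gset]; exact Set.mem_insert_of_mem _ (Set.mem_insert_of_mem _ (Set.mem_insert_of_mem _ (Set.mem_insert _ _))))
lemma gm4 : (X 1 ^ 4 : Rp) ∈ Ideal.span Gset :=
  Ideal.subset_span (by rw [Gset]; exact Set.mem_insert_of_mem _ (Set.mem_insert_of_mem _ (Set.mem_insert_of_mem _ (Set.mem_insert_of_mem _ (Set.mem_insert _ _)))))
lemma gm5 : (X 1 ^ 3 * X 2 : Rp) ∈ Ideal.span Gset :=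
  Ideal.subset_span (by rw [Gset]; exact Set.mem_insert_of_mem _ (Set.mem_insert_of_mem _ (Set.mem_insert_of_mem _ (Set.mem_insert_of_mem _ (Set.mem_insert_of_mem _ (Set.mem_insert _ _))))))
lemma gm6 : (X 1 ^ 2 * X 2 ^ 2 : Rp) ∈ Ideal.span Gset :=
  Ideal.subset_span (by rw [Gset]; exact Set.mem_insert_of_mem _ (Set.mem_insert_of_mem _ (Set.mem_insert_of_mem _ (Set.mem_insert_of_mem _ (Set.mem_insert_of_mem _ (Set.mem_insert_of_mem _ (Set.mem_insert _ _)))))))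
lemma gm7 : (X 1 * X 2 ^ 3 : Rp) ∈ Ideal.span Gset :=
  Ideal.subset_span (by rw [Gset]; exact Set.mem_insert_of_mem _ (Set.mem_insert_of_mem _ (Set.mem_insert_of_mem _ (Set.mem_insert_of_mem _ (Set.mem_insert_of_mem _ (Set.mem_insert_of_mem _ (Set.mem_insert_of_mem _ (Set.mem_insert _ _))))))))
lemma gm8 : (X 2 ^ 4 : Rp) ∈ Ideal.span Gset :=
  Ideal.subset_span (by rw [Gset]; exact Set.mem_insert_of_mem _ (Set.mem_insert_of_mem _ (Set.mem_insert_of_mem _ (Set.mem_insert_of_mem _ (Set.mem_insert_of_mem _ (Set.mem_insert_of_mem _ (Set.mem_insert_of_mem _ (Set.mem_insert_of_mem _ (Set.mem_insert _ _)))))))))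
lemma gm9 : (X 1 ^ 3 - X 0 ^ 3 * X 2 : Rp) ∈ Ideal.span Gset :=
  Ideal.subset_span (by rw [Gset]; exact Set.mem_insert_of_mem _ (Set.mem_insert_of_mem _ (Set.mem_insert_of_mem _ (Set.mem_insert_of_mem _ (Set.mem_insert_of_mem _ (Set.mem_insert_of_mem _ (Set.mem_insert_of_mem _ (Set.mem_insert_of_mem _ (Set.mem_insert_of_mem _ (rfl))))))))))
lemma um0 : (X 0 ^ 4 : Rp) ∈ Ugens := by rw [Ugens]; exact Set.mem_insert _ _
lemma um1 : (X 0 ^ 2 * X 1 ^ 2 : Rp) ∈ Ugens := by rw [Ugens]; exact Set.mem_insert_of_mem _ (Set.mem_insert _ _)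
lemma um2 : (X 0 ^ 2 * X 1 * X 2 : Rp) ∈ Ugens := by rw [Ugens]; exact Set.mem_insert_of_mem _ (Set.mem_insert_of_mem _ (Set.mem_insert _ _))
lemma um3 : (X 0 ^ 2 * X 2 ^ 2 : Rp) ∈ Ugens := by rw [Ugens]; exact Set.mem_insert_of_mem _ (Set.mem_insert_of_mem _ (Set.mem_insert_of_mem _ (Set.mem_insert _ _)))
lemma um4 : (X 1 ^ 4 : Rp) ∈ Ugens := by rw [Ugens]; exact Set.mem_insert_of_mem _ (Set.mem_insert_of_mem _ (Set.mem_insert_of_mem _ (Set.mem_insert_of_mem _ (Set.mem_insert _ _))))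
lemma um5 : (X 1 ^ 3 * X 2 : Rp) ∈ Ugens := by rw [Ugens]; exact Set.mem_insert_of_mem _ (Set.mem_insert_of_mem _ (Set.mem_insert_of_mem _ (Set.mem_insert_of_mem _ (Set.mem_insert_of_mem _ (Set.mem_insert _ _)))))
lemma um6 : (X 1 ^ 2 * X 2 ^ 2 : Rp) ∈ Ugens := by rw [Ugens]; exact Set.mem_insert_of_mem _ (Set.mem_insert_of_mem _ (Set.mem_insert_of_mem _ (Set.mem_insert_of_mem _ (Set.mem_insert_of_mem _ (Set.mem_insert_of_mem _ (Set.mem_insert _ _))))))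
lemma um7 : (X 1 * X 2 ^ 3 : Rp) ∈ Ugens := by rw [Ugens]; exact Set.mem_insert_of_mem _ (Set.mem_insert_of_mem _ (Set.mem_insert_of_mem _ (Set.mem_insert_of_mem _ (Set.mem_insert_of_mem _ (Set.mem_insert_of_mem _ (Set.mem_insert_of_mem _ (Set.mem_insert _ _)))))))
lemma um8 : (X 2 ^ 4 : Rp) ∈ Ugens := by rw [Ugens]; exact Set.mem_insert_of_mem _ (Set.mem_insert_of_mem _ (Set.mem_insert_of_mem _ (Set.mem_insert_of_mem _ (Set.mem_insert_of_mem _ (Set.mem_insert_of_mem _ (Set.mem_insert_of_mem _ (Set.mem_insert_of_mem _ (Set.mem_insert _ _))))))))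
lemma um9 : (X 1 ^ 3 - X 0 ^ 3 * X 2 : Rp) ∈ Ugens := by rw [Ugens]; exact Set.mem_insert_of_mem _ (Set.mem_insert_of_mem _ (Set.mem_insert_of_mem _ (Set.mem_insert_of_mem _ (Set.mem_insert_of_mem _ (Set.mem_insert_of_mem _ (Set.mem_insert_of_mem _ (Set.mem_insert_of_mem _ (Set.mem_insert_of_mem _ (Set.mem_insert _ _)))))))))
lemma um10 : (X 0 * X 1 ^ 3 - X 0 ^ 4 * X 2 : Rp) ∈ Ugens := by rw [Ugens]; exact Set.mem_insert_of_mem _ (Set.mem_insert_of_mem _ (Set.mem_insert_of_mem _ (Set.mem_insert_of_mem _ (Set.mem_insert_of_mem _ (Set.mem_insert_of_mem _ (Set.mem_insert_of_mem _ (Set.mem_insert_of_mem _ (Set.mem_insert_of_mem _ (Set.mem_insert_of_mem _ (rfl))))))))))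

lemma JJ_le_span : JJ ≤ Ideal.span Gset := by
  have hmem : ∀ p ∈ Gset, p ∈ Ideal.span Gset := fun p hp => Ideal.subset_span hp
  apply sup_le
  · -- (AB)^2 ≤ span Gset
    have h1 : AB ≤ Ideal.span ({X 0 ^ 2, X 1 ^ 2, X 1 * X 2, X 2 ^ 2} : Set Rp) := by
      apply sup_le
      · rw [Ideal.span_le]
        rintro p rfl
        exact Ideal.subset_span (by simp)
      · rw [pow_two, Ideal.span_mul_span', Ideal.span_le]
        rintro p hp
        rw [Set.mem_mul] at hp
        obtain ⟨u, hu, w, hw, rfl⟩ := hp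
        simp only [Set.mem_insert_iff, Set.mem_singleton_iff] at hu hw
        rcases hu with rfl | rfl <;> rcases hw with rfl | rfl
        · exact Ideal.subset_span (by rw [← pow_two]; simp)
        · exact Ideal.subset_span (by simp)
        · rw [mul_comm]; exact Ideal.subset_span (by simp)
        · exact Ideal.subset_span (by rw [← pow_two]; simp)
    have h2 : AB ^ 2 ≤ Ideal.span ({X 0 ^ 2, X 1 ^ 2, X 1 * X 2, X 2 ^ 2} : Set Rp) ^ 2 := by
      rw [pow_two, pow_two]; exact Ideal.mul_mono h1 h1
    refine h2.trans ?_
    rw [pow_two, Ideal.span_mul_span', Ideal.span_le]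
    rintro p hp
    rw [Set.mem_mul] at hp
    obtain ⟨u, hu, w, hw, rfl⟩ := hp
    simp only [Set.mem_insert_iff, Set.mem_singleton_iff] at hu hw
    rcases hu with rfl | rfl | rfl | rfl <;> rcases hw with rfl | rfl | rfl | rfl
    · rw [show ((X 0 : Rp) ^ 2 * X 0 ^ 2) = X 0 ^ 4 by ring]
      exact gm0
    · exact gm1
    · rw [show ((X 0 : Rp) ^ 2 * (X 1 * X 2)) = X 0 ^ 2 * X 1 * X 2 by ring]
      exact gm2
    · exact gm3
    · rw [show ((X 1 : Rp) ^ 2 * X 0 ^ 2) = X 0 ^ 2 * X 1 ^ 2 by ring]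
      exact gm1
    · rw [show ((X 1 : Rp) ^ 2 * X 1 ^ 2) = X 1 ^ 4 by ring]
      exact gm4
    · rw [show ((X 1 : Rp) ^ 2 * (X 1 * X 2)) = X 1 ^ 3 * X 2 by ring]
      exact gm5
    · exact gm6
    · rw [show ((X 1 : Rp) * X 2 * X 0 ^ 2) = X 0 ^ 2 * X 1 * X 2 by ring]
      exact gm2
    · rw [show ((X 1 : Rp) * X 2 * X 1 ^ 2) = X 1 ^ 3 * X 2 by ring]
      exact gm5
    · rw [show ((X 1 : Rp) * X 2 * (X 1 * X 2)) = X 1 ^ 2 * X 2 ^ 2 by ring]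
      exact gm6
    · rw [show ((X 1 : Rp) * X 2 * X 2 ^ 2) = X 1 * X 2 ^ 3 by ring]
      exact gm7
    · rw [show ((X 2 : Rp) ^ 2 * X 0 ^ 2) = X 0 ^ 2 * X 2 ^ 2 by ring]
      exact gm3
    · rw [show ((X 2 : Rp) ^ 2 * X 1 ^ 2) = X 1 ^ 2 * X 2 ^ 2 by ring]
      exact gm6
    · rw [show ((X 2 : Rp) ^ 2 * (X 1 * X 2)) = X 1 * X 2 ^ 3 by ring]
      exact gm7
    · rw [show ((X 2 : Rp) ^ 2 * X 2 ^ 2) = X 2 ^ 4 by ring]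
      exact gm8
  · rw [Ideal.span_le]
    rintro p rfl
    exact gm9

lemma W_mem_TT {a b c : ℕ} (h : 5 ≤ a + b + c) :
    (X 0 ^ a * X 1 ^ b * X 2 ^ c : Rp) ∈ TT :=
  Submodule.subset_span (Or.inr ⟨a, b, c, h, rfl⟩)

lemma U_mem_TT {p : Rp} (h : p ∈ Ugens) : p ∈ TT :=
  Submodule.subset_span (Or.inl h)

lemma X_mul_mem_TT (i : Fin 3) {p : Rp} (hp : p ∈ TT) : X i * p ∈ TT := by
  induction hp using Submodule.span_induction with
  | mem g hg =>
    rcases hg with hg | hg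
    · simp only [Ugens, Set.mem_insert_iff, Set.mem_singleton_iff] at hg
      fin_cases i <;>
        simp only [Fin.zero_eta, Fin.mk_one, Fin.reduceFinMk] <;>
        rcases hg with rfl|rfl|rfl|rfl|rfl|rfl|rfl|rfl|rfl|rfl|rfl
      -- i = 0
      · rw [show ((X 0 : Rp) * X 0 ^ 4) = X 0 ^ 5 * X 1 ^ 0 * X 2 ^ 0 by ring]
        exact W_mem_TT (by norm_num)
      · rw [show ((X 0 : Rp) * (X 0 ^ 2 * X 1 ^ 2)) = X 0 ^ 3 * X 1 ^ 2 * X 2 ^ 0 by ring]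
        exact W_mem_TT (by norm_num)
      · rw [show ((X 0 : Rp) * (X 0 ^ 2 * X 1 * X 2)) = X 0 ^ 3 * X 1 ^ 1 * X 2 ^ 1 by ring]
        exact W_mem_TT (by norm_num)
      · rw [show ((X 0 : Rp) * (X 0 ^ 2 * X 2 ^ 2)) = X 0 ^ 3 * X 1 ^ 0 * X 2 ^ 2 by ring]
        exact W_mem_TT (by norm_num)
      · rw [show ((X 0 : Rp) * X 1 ^ 4) = X 0 ^ 1 * X 1 ^ 4 * X 2 ^ 0 by ring]
        exact W_mem_TT (by norm_num)
      · rw [show ((X 0 : Rp) * (X 1 ^ 3 * X 2)) = X 0 ^ 1 * X 1 ^ 3 * X 2 ^ 1 by ring]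
        exact W_mem_TT (by norm_num)
      · rw [show ((X 0 : Rp) * (X 1 ^ 2 * X 2 ^ 2)) = X 0 ^ 1 * X 1 ^ 2 * X 2 ^ 2 by ring]
        exact W_mem_TT (by norm_num)
      · rw [show ((X 0 : Rp) * (X 1 * X 2 ^ 3)) = X 0 ^ 1 * X 1 ^ 1 * X 2 ^ 3 by ring]
        exact W_mem_TT (by norm_num)
      · rw [show ((X 0 : Rp) * X 2 ^ 4) = X 0 ^ 1 * X 1 ^ 0 * X 2 ^ 4 by ring]
        exact W_mem_TT (by norm_num)
      · rw [show ((X 0 : Rp) * (X 1 ^ 3 - X 0 ^ 3 * X 2)) = X 0 * X 1 ^ 3 - X 0 ^ 4 * X 2 by ring]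
        exact U_mem_TT um10
      · rw [show ((X 0 : Rp) * (X 0 * X 1 ^ 3 - X 0 ^ 4 * X 2))
            = X 0 ^ 2 * X 1 ^ 3 * X 2 ^ 0 - X 0 ^ 5 * X 1 ^ 0 * X 2 ^ 1 by ring]
        exact sub_mem (W_mem_TT (by norm_num)) (W_mem_TT (by norm_num))
      -- i = 1
      · rw [show ((X 1 : Rp) * X 0 ^ 4) = X 0 ^ 4 * X 1 ^ 1 * X 2 ^ 0 by ring]
        exact W_mem_TT (by norm_num)
      · rw [show ((X 1 : Rp) * (X 0 ^ 2 * X 1 ^ 2)) = X 0 ^ 2 * X 1 ^ 3 * X 2 ^ 0 by ring]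
        exact W_mem_TT (by norm_num)
      · rw [show ((X 1 : Rp) * (X 0 ^ 2 * X 1 * X 2)) = X 0 ^ 2 * X 1 ^ 2 * X 2 ^ 1 by ring]
        exact W_mem_TT (by norm_num)
      · rw [show ((X 1 : Rp) * (X 0 ^ 2 * X 2 ^ 2)) = X 0 ^ 2 * X 1 ^ 1 * X 2 ^ 2 by ring]
        exact W_mem_TT (by norm_num)
      · rw [show ((X 1 : Rp) * X 1 ^ 4) = X 0 ^ 0 * X 1 ^ 5 * X 2 ^ 0 by ring]
        exact W_mem_TT (by norm_num)
      · rw [show ((X 1 : Rp) * (X 1 ^ 3 * X 2)) = X 0 ^ 0 * X 1 ^ 4 * X 2 ^ 1 by ring]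
        exact W_mem_TT (by norm_num)
      · rw [show ((X 1 : Rp) * (X 1 ^ 2 * X 2 ^ 2)) = X 0 ^ 0 * X 1 ^ 3 * X 2 ^ 2 by ring]
        exact W_mem_TT (by norm_num)
      · rw [show ((X 1 : Rp) * (X 1 * X 2 ^ 3)) = X 0 ^ 0 * X 1 ^ 2 * X 2 ^ 3 by ring]
        exact W_mem_TT (by norm_num)
      · rw [show ((X 1 : Rp) * X 2 ^ 4) = X 0 ^ 0 * X 1 ^ 1 * X 2 ^ 4 by ring]
        exact W_mem_TT (by norm_num)
      · rw [show ((X 1 : Rp) * (X 1 ^ 3 - X 0 ^ 3 * X 2))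
            = X 1 ^ 4 - X 0 ^ 3 * X 1 ^ 1 * X 2 ^ 1 by ring]
        exact sub_mem (U_mem_TT um4) (W_mem_TT (by norm_num))
      · rw [show ((X 1 : Rp) * (X 0 * X 1 ^ 3 - X 0 ^ 4 * X 2))
            = X 0 ^ 1 * X 1 ^ 4 * X 2 ^ 0 - X 0 ^ 4 * X 1 ^ 1 * X 2 ^ 1 by ring]
        exact sub_mem (W_mem_TT (by norm_num)) (W_mem_TT (by norm_num))
      -- i = 2
      · rw [show ((X 2 : Rp) * X 0 ^ 4) = X 0 ^ 4 * X 1 ^ 0 * X 2 ^ 1 by ring]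
        exact W_mem_TT (by norm_num)
      · rw [show ((X 2 : Rp) * (X 0 ^ 2 * X 1 ^ 2)) = X 0 ^ 2 * X 1 ^ 2 * X 2 ^ 1 by ring]
        exact W_mem_TT (by norm_num)
      · rw [show ((X 2 : Rp) * (X 0 ^ 2 * X 1 * X 2)) = X 0 ^ 2 * X 1 ^ 1 * X 2 ^ 2 by ring]
        exact W_mem_TT (by norm_num)
      · rw [show ((X 2 : Rp) * (X 0 ^ 2 * X 2 ^ 2)) = X 0 ^ 2 * X 1 ^ 0 * X 2 ^ 3 by ring]
        exact W_mem_TT (by norm_num)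
      · rw [show ((X 2 : Rp) * X 1 ^ 4) = X 0 ^ 0 * X 1 ^ 4 * X 2 ^ 1 by ring]
        exact W_mem_TT (by norm_num)
      · rw [show ((X 2 : Rp) * (X 1 ^ 3 * X 2)) = X 0 ^ 0 * X 1 ^ 3 * X 2 ^ 2 by ring]
        exact W_mem_TT (by norm_num)
      · rw [show ((X 2 : Rp) * (X 1 ^ 2 * X 2 ^ 2)) = X 0 ^ 0 * X 1 ^ 2 * X 2 ^ 3 by ring]
        exact W_mem_TT (by norm_num)
      · rw [show ((X 2 : Rp) * (X 1 * X 2 ^ 3)) = X 0 ^ 0 * X 1 ^ 1 * X 2 ^ 4 by ring]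
        exact W_mem_TT (by norm_num)
      · rw [show ((X 2 : Rp) * X 2 ^ 4) = X 0 ^ 0 * X 1 ^ 0 * X 2 ^ 5 by ring]
        exact W_mem_TT (by norm_num)
      · rw [show ((X 2 : Rp) * (X 1 ^ 3 - X 0 ^ 3 * X 2))
            = X 1 ^ 3 * X 2 - X 0 ^ 3 * X 1 ^ 0 * X 2 ^ 2 by ring]
        exact sub_mem (U_mem_TT um5) (W_mem_TT (by norm_num))
      · rw [show ((X 2 : Rp) * (X 0 * X 1 ^ 3 - X 0 ^ 4 * X 2))
            = X 0 ^ 1 * X 1 ^ 3 * X 2 ^ 1 - X 0 ^ 4 * X 1 ^ 0 * X 2 ^ 2 by ring]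
        exact sub_mem (W_mem_TT (by norm_num)) (W_mem_TT (by norm_num))
    · obtain ⟨a, b, c, h5, rfl⟩ := hg
      fin_cases i <;> simp only [Fin.zero_eta, Fin.mk_one, Fin.reduceFinMk]
      · rw [show ((X 0 : Rp) * (X 0 ^ a * X 1 ^ b * X 2 ^ c))
            = X 0 ^ (a + 1) * X 1 ^ b * X 2 ^ c by rw [pow_add]; ring]
        exact W_mem_TT (by omega)
      · rw [show ((X 1 : Rp) * (X 0 ^ a * X 1 ^ b * X 2 ^ c))
            = X 0 ^ a * X 1 ^ (b + 1) * X 2 ^ c by rw [pow_add]; ring]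
        exact W_mem_TT (by omega)
      · rw [show ((X 2 : Rp) * (X 0 ^ a * X 1 ^ b * X 2 ^ c))
            = X 0 ^ a * X 1 ^ b * X 2 ^ (c + 1) by rw [pow_add]; ring]
        exact W_mem_TT (by omega)
  | zero => simpa using (zero_mem TT)
  | add p q _ _ hp hq => rw [mul_add]; exact add_mem hp hq
  | smul c p _ hp => rw [mul_smul_comm]; exact Submodule.smul_mem _ _ hp

lemma mul_mem_TT (r : Rp) {p : Rp} (hp : p ∈ TT) : r * p ∈ TT := by
  induction r using MvPolynomial.induction_on with
  | C a => rw [C_mul']; exact Submodule.smul_mem _ _ hp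
  | add q w hq hw => rw [add_mul]; exact add_mem hq hw
  | mul_X q i hq =>
    rw [show (q * X i) * p = X i * (q * p) by ring]
    exact X_mul_mem_TT i hq

lemma span_Gset_le_TT : ∀ {p : Rp}, p ∈ Ideal.span Gset → p ∈ TT := by
  intro p hp
  induction hp using Submodule.span_induction with
  | mem g hg =>
    refine U_mem_TT ?_
    simp only [Gset, Set.mem_insert_iff, Set.mem_singleton_iff] at hg
    simp only [Ugens, Set.mem_insert_iff, Set.mem_singleton_iff]
    rcases hg with h|h|h|h|h|h|h|h|h|h <;> simp only [h, true_or, or_true]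
  | zero => exact zero_mem TT
  | add a b _ _ ha hb => exact add_mem ha hb
  | smul r x _ hx => exact mul_mem_TT r hx

lemma JJ_le_TT : JJ.restrictScalars ℂ ≤ TT := fun _ hp => span_Gset_le_TT (JJ_le_span hp)

lemma TT_eq : JJ.restrictScalars ℂ = TT := le_antisymm JJ_le_TT TT_le_JJ

def ee (i : Fin 24) : Fin 3 →₀ ℕ := Ee (tt i).1 (tt i).2.1 (tt i).2.2

def phi (i : Fin 24) : Rp →ₗ[ℂ] ℂ :=
  lcoeff ℂ (ee i) + (if i = (20 : Fin 24) then lcoeff ℂ (Ee 0 3 0) else 0)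

def Phi : Rp →ₗ[ℂ] Rp := ∑ i : Fin 24, (phi i).smulRight (vv i)

lemma Phi_apply (f : Rp) : Phi f = ∑ i : Fin 24, phi i f • vv i := by
  simp [Phi, LinearMap.sum_apply, LinearMap.smulRight_apply]

lemma deg_tt : ∀ i : Fin 24, (tt i).1 + (tt i).2.1 + (tt i).2.2 ≤ 4 := by decide

lemma phi_W (i : Fin 24) {a b c : ℕ} (h : 5 ≤ a + b + c) :
    phi i (X 0 ^ a * X 1 ^ b * X 2 ^ c : Rp) = 0 := by
  have h1 : coeff (ee i) (X 0 ^ a * X 1 ^ b * X 2 ^ c : Rp) = 0 := by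
    rw [coeff_XXX, if_neg]
    rintro ⟨h1, h2, h3⟩
    have := deg_tt i
    simp only [ee, Ee_apply0, Ee_apply1, Ee_apply2] at h1 h2 h3
    omega
  have h2 : coeff (Ee 0 3 0) (X 0 ^ a * X 1 ^ b * X 2 ^ c : Rp) = 0 := by
    rw [coeff_XXX, if_neg]
    rintro ⟨h1, h2, h3⟩
    simp only [Ee_apply0, Ee_apply1, Ee_apply2] at h1 h2 h3
    omega
  simp only [phi, LinearMap.add_apply, lcoeff_apply, h1]
  split <;> simp [lcoeff_apply, h2]

lemma Phi_W {a b c : ℕ} (h : 5 ≤ a + b + c) :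
    Phi (X 0 ^ a * X 1 ^ b * X 2 ^ c : Rp) = 0 := by
  rw [Phi_apply]
  refine Finset.sum_eq_zero fun i _ => ?_
  rw [phi_W i h, zero_smul]

lemma tt_ne_030 : ∀ k : Fin 24, ¬(0 = (tt k).1 ∧ 3 = (tt k).2.1 ∧ 0 = (tt k).2.2) := by
  decide

lemma tt_inj : ∀ i k : Fin 24,
    ((tt i).1 = (tt k).1 ∧ (tt i).2.1 = (tt k).2.1 ∧ (tt i).2.2 = (tt k).2.2) → i = k := by
  decide

lemma phi_vv (i k : Fin 24) : phi i (vv k) = if i = k then 1 else 0 := by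
  have base : coeff (ee i) (vv k)
      = if (tt i).1 = (tt k).1 ∧ (tt i).2.1 = (tt k).2.1 ∧ (tt i).2.2 = (tt k).2.2
        then 1 else 0 := by
    rw [vv, coeff_XXX]
    simp only [ee, Ee_apply0, Ee_apply1, Ee_apply2]
  have h030 : coeff (Ee 0 3 0) (vv k) = 0 := by
    rw [vv, coeff_XXX, if_neg]
    simp only [Ee_apply0, Ee_apply1, Ee_apply2]
    exact tt_ne_030 k
  simp only [phi, LinearMap.add_apply, lcoeff_apply, base]
  by_cases hik : i = k
  · subst hik
    rw [if_pos ⟨rfl, rfl, rfl⟩, if_pos rfl]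
    split <;> simp [lcoeff_apply, h030]
  · rw [if_neg (fun h => hik (tt_inj i k h)), if_neg hik]
    split <;> simp [lcoeff_apply, h030]

lemma Phi_vv (k : Fin 24) : Phi (vv k) = vv k := by
  rw [Phi_apply]
  rw [Finset.sum_congr rfl (fun i _ => by rw [phi_vv i k])]
  simp [ite_smul]

lemma Phi_V24 : ∀ {f : Rp}, f ∈ V24 → Phi f = f := by
  intro f hf
  induction hf using Submodule.span_induction with
  | mem g hg => obtain ⟨k, rfl⟩ := hg; exact Phi_vv k
  | zero => simp
  | add a b _ _ ha hb => rw [map_add, ha, hb]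
  | smul r x _ hx => rw [map_smul, hx]

lemma Phi_mono_zero {a b c : ℕ}
    (h : ∀ i : Fin 24, ¬((tt i).1 = a ∧ (tt i).2.1 = b ∧ (tt i).2.2 = c))
    (h030 : ¬((0 : ℕ) = a ∧ (3 : ℕ) = b ∧ (0 : ℕ) = c)) :
    Phi (X 0 ^ a * X 1 ^ b * X 2 ^ c : Rp) = 0 := by
  rw [Phi_apply]
  refine Finset.sum_eq_zero fun i _ => ?_
  have h1 : coeff (ee i) (X 0 ^ a * X 1 ^ b * X 2 ^ c : Rp) = 0 := by
    rw [coeff_XXX, if_neg]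
    simp only [ee, Ee_apply0, Ee_apply1, Ee_apply2]
    exact h i
  have h2 : coeff (Ee 0 3 0) (X 0 ^ a * X 1 ^ b * X 2 ^ c : Rp) = 0 := by
    rw [coeff_XXX, if_neg]
    simp only [Ee_apply0, Ee_apply1, Ee_apply2]
    exact h030
  have : phi i (X 0 ^ a * X 1 ^ b * X 2 ^ c : Rp) = 0 := by
    simp only [phi, LinearMap.add_apply, lcoeff_apply, h1]
    split <;> simp [lcoeff_apply, h2]
  rw [this, zero_smul]

lemma Phi_y3 : Phi (X 1 ^ 3 : Rp) = vv 20 := by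
  have hy3 : (X 1 ^ 3 : Rp) = X 0 ^ 0 * X 1 ^ 3 * X 2 ^ 0 := by ring
  rw [Phi_apply]
  have hphi : ∀ i : Fin 24, phi i (X 1 ^ 3 : Rp)
      = if i = 20 then 1 else 0 := by
    intro i
    have h1 : coeff (ee i) (X 1 ^ 3 : Rp) = 0 := by
      rw [hy3, coeff_XXX, if_neg]
      simp only [ee, Ee_apply0, Ee_apply1, Ee_apply2]
      have : ∀ k : Fin 24, ¬((tt k).1 = 0 ∧ (tt k).2.1 = 3 ∧ (tt k).2.2 = 0) := by decide
      exact this i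
    have h2 : coeff (Ee 0 3 0) (X 1 ^ 3 : Rp) = 1 := by
      rw [hy3, coeff_XXX, if_pos ⟨by simp, by simp, by simp⟩]
    simp only [phi, LinearMap.add_apply, lcoeff_apply, h1]
    split <;> simp [lcoeff_apply, h2]
  rw [Finset.sum_congr rfl (fun i _ => by rw [hphi i])]
  simp [ite_smul]

lemma Phi_TT : ∀ {f : Rp}, f ∈ TT → Phi f = 0 := by
  intro f hf
  induction hf using Submodule.span_induction with
  | mem g hg =>
    rcases hg with hg | hg
    · simp only [Ugens, Set.mem_insert_iff, Set.mem_singleton_iff] at hg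
      rcases hg with rfl|rfl|rfl|rfl|rfl|rfl|rfl|rfl|rfl|rfl|rfl
      · rw [show ((X 0 : Rp) ^ 4) = X 0 ^ 4 * X 1 ^ 0 * X 2 ^ 0 by ring]
        exact Phi_mono_zero (a := 4) (b := 0) (c := 0) (by decide) (by omega)
      · rw [show ((X 0 : Rp) ^ 2 * X 1 ^ 2) = X 0 ^ 2 * X 1 ^ 2 * X 2 ^ 0 by ring]
        exact Phi_mono_zero (a := 2) (b := 2) (c := 0) (by decide) (by omega)
      · rw [show ((X 0 : Rp) ^ 2 * X 1 * X 2) = X 0 ^ 2 * X 1 ^ 1 * X 2 ^ 1 by ring]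
        exact Phi_mono_zero (a := 2) (b := 1) (c := 1) (by decide) (by omega)
      · rw [show ((X 0 : Rp) ^ 2 * X 2 ^ 2) = X 0 ^ 2 * X 1 ^ 0 * X 2 ^ 2 by ring]
        exact Phi_mono_zero (a := 2) (b := 0) (c := 2) (by decide) (by omega)
      · rw [show ((X 1 : Rp) ^ 4) = X 0 ^ 0 * X 1 ^ 4 * X 2 ^ 0 by ring]
        exact Phi_mono_zero (a := 0) (b := 4) (c := 0) (by decide) (by omega)
      · rw [show ((X 1 : Rp) ^ 3 * X 2) = X 0 ^ 0 * X 1 ^ 3 * X 2 ^ 1 by ring]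
        exact Phi_mono_zero (a := 0) (b := 3) (c := 1) (by decide) (by omega)
      · rw [show ((X 1 : Rp) ^ 2 * X 2 ^ 2) = X 0 ^ 0 * X 1 ^ 2 * X 2 ^ 2 by ring]
        exact Phi_mono_zero (a := 0) (b := 2) (c := 2) (by decide) (by omega)
      · rw [show ((X 1 : Rp) * X 2 ^ 3) = X 0 ^ 0 * X 1 ^ 1 * X 2 ^ 3 by ring]
        exact Phi_mono_zero (a := 0) (b := 1) (c := 3) (by decide) (by omega)
      · rw [show ((X 2 : Rp) ^ 4) = X 0 ^ 0 * X 1 ^ 0 * X 2 ^ 4 by ring]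
        exact Phi_mono_zero (a := 0) (b := 0) (c := 4) (by decide) (by omega)
      · -- y^3 - x^3 z
        have hx3z : (X 0 ^ 3 * X 2 : Rp) = vv 20 := by
          have ht : tt 20 = (3, 0, 1) := by decide
          simp [vv, ht]
        rw [map_sub, Phi_y3, hx3z, Phi_vv 20, sub_self]
      · -- x y^3 - x^4 z
        rw [map_sub,
          show ((X 0 : Rp) * X 1 ^ 3) = X 0 ^ 1 * X 1 ^ 3 * X 2 ^ 0 by ring,
          show ((X 0 : Rp) ^ 4 * X 2) = X 0 ^ 4 * X 1 ^ 0 * X 2 ^ 1 by ring,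
          Phi_mono_zero (a := 1) (b := 3) (c := 0) (by decide) (by omega),
          Phi_mono_zero (a := 4) (b := 0) (c := 1) (by decide) (by omega),
          sub_self]
    · obtain ⟨a, b, c, h5, rfl⟩ := hg
      exact Phi_W h5
  | zero => simp
  | add a b _ _ ha hb => rw [map_add, ha, hb, add_zero]
  | smul r x _ hx => rw [map_smul, hx, smul_zero]

lemma monomial_eq_X (d : Fin 3 →₀ ℕ) :
    (monomial d (1 : ℂ) : Rp) = X 0 ^ (d 0) * X 1 ^ (d 1) * X 2 ^ (d 2) := by
  have hd : Ee (d 0) (d 1) (d 2) = d := by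
    ext j; fin_cases j <;> simp
  rw [← hd, ME]
  simp

lemma hstd (i : Fin 24) : vv i ∈ V24 ⊔ TT :=
  Submodule.mem_sup_left (Submodule.subset_span ⟨i, rfl⟩)

lemma sup_top : V24 ⊔ TT = ⊤ := by
  rw [eq_top_iff, ← (basisMonomials (Fin 3) ℂ).span_eq, Submodule.span_le]
  rintro p ⟨d, rfl⟩
  have hb : (basisMonomials (Fin 3) ℂ) d = (monomial d (1 : ℂ) : Rp) := by
    rw [coe_basisMonomials]
  rw [SetLike.mem_coe, hb, monomial_eq_X d]
  generalize d 0 = a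
  generalize d 1 = b
  generalize d 2 = c
  rcases Nat.lt_or_ge (a + b + c) 5 with h | h
  · have h4 : a + b + c ≤ 4 := by omega
    have ha : a ≤ 4 := by omega
    clear h
    have hb' : b ≤ 4 := by omega
    have hc' : c ≤ 4 := by omega
    interval_cases a <;> interval_cases b <;> interval_cases c <;> try omega
    · exact (by simpa [vv, (show tt 0 = (0, 0, 0) by decide)] using hstd 0)
    · exact (by simpa [vv, (show tt 3 = (0, 0, 1) by decide)] using hstd 3)
    · exact (by simpa [vv, (show tt 9 = (0, 0, 2) by decide)] using hstd 9)
    · exact (by simpa [vv, (show tt 18 = (0, 0, 3) by decide)] using hstd 18)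
    · simpa using Submodule.mem_sup_right (U_mem_TT um8)
    · exact (by simpa [vv, (show tt 2 = (0, 1, 0) by decide)] using hstd 2)
    · exact (by simpa [vv, (show tt 8 = (0, 1, 1) by decide)] using hstd 8)
    · exact (by simpa [vv, (show tt 17 = (0, 1, 2) by decide)] using hstd 17)
    · simpa using Submodule.mem_sup_right (U_mem_TT um7)
    · exact (by simpa [vv, (show tt 7 = (0, 2, 0) by decide)] using hstd 7)
    · exact (by simpa [vv, (show tt 16 = (0, 2, 1) by decide)] using hstd 16)
    · simpa using Submodule.mem_sup_right (U_mem_TT um6)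
    · have h1 : (X 1 ^ 3 - X 0 ^ 3 * X 2 : Rp) ∈ V24 ⊔ TT :=
        Submodule.mem_sup_right (U_mem_TT um9)
      have h2 : (X 0 ^ 3 * X 2 : Rp) ∈ V24 ⊔ TT := by
        simpa [vv, (show tt 20 = (3, 0, 1) by decide)] using hstd 20
      simpa using add_mem h1 h2
    · simpa using Submodule.mem_sup_right (U_mem_TT um5)
    · simpa using Submodule.mem_sup_right (U_mem_TT um4)
    · exact (by simpa [vv, (show tt 1 = (1, 0, 0) by decide)] using hstd 1)
    · exact (by simpa [vv, (show tt 6 = (1, 0, 1) by decide)] using hstd 6)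
    · exact (by simpa [vv, (show tt 15 = (1, 0, 2) by decide)] using hstd 15)
    · exact (by simpa [vv, (show tt 23 = (1, 0, 3) by decide)] using hstd 23)
    · exact (by simpa [vv, (show tt 5 = (1, 1, 0) by decide)] using hstd 5)
    · exact (by simpa [vv, (show tt 14 = (1, 1, 1) by decide)] using hstd 14)
    · exact (by simpa [vv, (show tt 22 = (1, 1, 2) by decide)] using hstd 22)
    · exact (by simpa [vv, (show tt 13 = (1, 2, 0) by decide)] using hstd 13)
    · exact (by simpa [vv, (show tt 21 = (1, 2, 1) by decide)] using hstd 21)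
    · have h1 : (X 0 * X 1 ^ 3 - X 0 ^ 4 * X 2 : Rp) ∈ V24 ⊔ TT :=
        Submodule.mem_sup_right (U_mem_TT um10)
      have h2 : (X 0 ^ 4 * X 1 ^ 0 * X 2 ^ 1 : Rp) ∈ V24 ⊔ TT :=
        Submodule.mem_sup_right (W_mem_TT (by norm_num))
      simpa using add_mem h1 h2
    · exact (by simpa [vv, (show tt 4 = (2, 0, 0) by decide)] using hstd 4)
    · exact (by simpa [vv, (show tt 12 = (2, 0, 1) by decide)] using hstd 12)
    · simpa using Submodule.mem_sup_right (U_mem_TT um3)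
    · exact (by simpa [vv, (show tt 11 = (2, 1, 0) by decide)] using hstd 11)
    · simpa using Submodule.mem_sup_right (U_mem_TT um2)
    · simpa using Submodule.mem_sup_right (U_mem_TT um1)
    · exact (by simpa [vv, (show tt 10 = (3, 0, 0) by decide)] using hstd 10)
    · exact (by simpa [vv, (show tt 20 = (3, 0, 1) by decide)] using hstd 20)
    · exact (by simpa [vv, (show tt 19 = (3, 1, 0) by decide)] using hstd 19)
    · simpa using Submodule.mem_sup_right (U_mem_TT um0)
  · exact Submodule.mem_sup_right (W_mem_TT h)

lemma lin_indep : LinearIndependent ℂ vv := by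
  have hinj : Function.Injective ee := by
    intro i j hij
    refine tt_inj i j ⟨?_, ?_, ?_⟩
    · have := congrArg (fun f => f 0) hij; simpa [ee] using this
    · have := congrArg (fun f => f 1) hij; simpa [ee] using this
    · have := congrArg (fun f => f 2) hij; simpa [ee] using this
  have h := (basisMonomials (Fin 3) ℂ).linearIndependent.comp ee hinj
  have hv : vv = (⇑(basisMonomials (Fin 3) ℂ)) ∘ ee := by
    funext i
    simp only [Function.comp_apply, coe_basisMonomials]
    rw [ee, ME, vv]
  rw [hv]; exact h

lemma finrank_V24 : Module.finrank ℂ V24 = 24 := by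
  have h := finrank_span_eq_card lin_indep
  rw [Fintype.card_fin] at h; exact h

def qmap : V24 →ₗ[ℂ] Rp ⧸ TT := TT.mkQ.comp V24.subtype

lemma qmap_bij : Function.Bijective qmap := by
  constructor
  · rw [← LinearMap.ker_eq_bot]
    rw [Submodule.eq_bot_iff]
    rintro x hx
    have hx' : TT.mkQ (x : Rp) = 0 := hx
    rw [Submodule.mkQ_apply, Submodule.Quotient.mk_eq_zero] at hx'
    have h1 := Phi_TT hx'
    have h2 := Phi_V24 x.2
    exact Subtype.ext (by rw [← h2, h1]; simp)
  · rw [← LinearMap.range_eq_top, qmap, LinearMap.range_comp, Submodule.range_subtype]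
    rw [eq_top_iff]
    rintro q _
    obtain ⟨p, rfl⟩ := TT.mkQ_surjective q
    have hp : p ∈ V24 ⊔ TT := by rw [sup_top]; trivial
    rw [Submodule.mem_sup] at hp
    obtain ⟨u, hu, w, hw, rfl⟩ := hp
    refine ⟨u, hu, ?_⟩
    rw [map_add, Submodule.mkQ_apply, Submodule.mkQ_apply,
      (Submodule.Quotient.mk_eq_zero TT).mpr hw, add_zero]

end QI24

/-- The quotient ring `ℂ[x,y,z]/I`, where `I = ((x²) + (y,z)²)² + (y³ − x³z)`,
is a 24-dimensional `ℂ`-vector space. -/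
theorem quotient_by_I_finrank_eq_24 :
    Module.finrank ℂ
      (MvPolynomial (Fin 3) ℂ ⧸
        ((Ideal.span {(X 0 : MvPolynomial (Fin 3) ℂ) ^ 2}
            + (Ideal.span {(X 1 : MvPolynomial (Fin 3) ℂ), X 2}) ^ 2) ^ 2
          + Ideal.span {(X 1 : MvPolynomial (Fin 3) ℂ) ^ 3 - (X 0) ^ 3 * X 2})) = 24 := by
  have e1 : (Rp ⧸ (JJ : Ideal Rp).restrictScalars ℂ) ≃ₗ[ℂ]
      (MvPolynomial (Fin 3) ℂ ⧸
        ((Ideal.span {(X 0 : MvPolynomial (Fin 3) ℂ) ^ 2}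
            + (Ideal.span {(X 1 : MvPolynomial (Fin 3) ℂ), X 2}) ^ 2) ^ 2
          + Ideal.span {(X 1 : MvPolynomial (Fin 3) ℂ) ^ 3 - (X 0) ^ 3 * X 2})) :=
    Submodule.Quotient.restrictScalarsEquiv ℂ (JJ : Ideal Rp)
  have e2 : (Rp ⧸ (JJ : Ideal Rp).restrictScalars ℂ) ≃ₗ[ℂ] (Rp ⧸ TT) :=
    Submodule.quotEquivOfEq _ _ TT_eq
  have e3 : V24 ≃ₗ[ℂ] (Rp ⧸ TT) := LinearEquiv.ofBijective qmap qmap_bij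
  rw [← e1.finrank_eq, e2.finrank_eq, ← e3.finrank_eq, finrank_V24]
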